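/- Let $a,b,T>0$ and let $y:(0,T)\to\mathbb{R}$ be continuously differentiable with $y'(t)\le -a\,y(t)^2+b$ for all $t\in(0,T)$ at which $y(t)>0$. Then $y(t)\le\sqrt{b/a}\,\coth(\sqrt{ab}\,t)$ for all $t\in(0,T)$. -/

import Mathlib

open Filter Set Topology

private lemma coth_hasDerivAt {c : ℝ} (hc : 0 < c) {ε t : ℝ} (ht : ε < t) :
    HasDerivAt (fun t => Real.cosh (c * (t - ε)) / Real.sinh (c * (t - ε)))
      (-c / (Real.sinh (c * (t - ε)))^2) t := by
  have hu : HasDerivAt (fun t : ℝ => c * (t - ε)) c t := by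
    simpa using ((hasDerivAt_id t).sub_const ε).const_mul c
  have hcosh : HasDerivAt (fun t => Real.cosh (c * (t - ε)))
      (Real.sinh (c * (t - ε)) * c) t := (Real.hasDerivAt_cosh _).comp t hu
  have hsinh : HasDerivAt (fun t => Real.sinh (c * (t - ε)))
      (Real.cosh (c * (t - ε)) * c) t := (Real.hasDerivAt_sinh _).comp t hu
  have hs : Real.sinh (c * (t - ε)) ≠ 0 :=
    (Real.sinh_pos_iff.2 (mul_pos hc (sub_pos.2 ht))).ne'
  have := hcosh.div hsinh hs
  refine this.congr_deriv ?_
  have hid : Real.cosh (c * (t - ε)) ^ 2 - Real.sinh (c * (t - ε)) ^ 2 = 1 :=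
    Real.cosh_sq_sub_sinh_sq _
  field_simp
  linear_combination (-1) * hid

theorem ode_comparison_coth (a b T : ℝ) (ha : 0 < a) (hb : 0 < b) (hT : 0 < T)
    (y y' : ℝ → ℝ)
    (hderiv : ∀ t ∈ Set.Ioo 0 T, HasDerivAt y (y' t) t)
    (hcont : ContinuousOn y' (Set.Ioo 0 T))
    (hineq : ∀ t ∈ Set.Ioo 0 T, 0 < y t → y' t ≤ -a * (y t)^2 + b) :
    ∀ t ∈ Set.Ioo 0 T,
      y t ≤ Real.sqrt (b / a) *
        (Real.cosh (Real.sqrt (a * b) * t) / Real.sinh (Real.sqrt (a * b) * t)) := by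
  intro t₀ ht₀
  obtain ⟨ht₀0, ht₀T⟩ := ht₀
  have hab : (0:ℝ) < a * b := mul_pos ha hb
  set c := Real.sqrt (a * b) with hc_def
  have hc : 0 < c := Real.sqrt_pos.2 hab
  set q := Real.sqrt (b / a) with hq_def
  have hq : 0 < q := Real.sqrt_pos.2 (div_pos hb ha)
  have hqc : q * c = b := by
    rw [hq_def, hc_def, ← Real.sqrt_mul (by positivity) (a * b),
      show b / a * (a * b) = b ^ 2 by field_simp]
    exact Real.sqrt_sq hb.le
  have hq2 : q ^ 2 = b / a := Real.sq_sqrt (by positivity)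
  -- key estimate with shifted comparison function
  have key : ∀ ε ∈ Set.Ioo (0:ℝ) t₀,
      y t₀ ≤ q * (Real.cosh (c * (t₀ - ε)) / Real.sinh (c * (t₀ - ε))) + ε := by
    rintro ε ⟨hε0, hεt₀⟩
    set g : ℝ → ℝ := fun t => q * (Real.cosh (c * (t - ε)) / Real.sinh (c * (t - ε)))
      with hg_def
    have hεT : ε < T := hεt₀.trans ht₀T
    have hsinh_pos : ∀ t, ε < t → 0 < Real.sinh (c * (t - ε)) := fun t ht =>
      Real.sinh_pos_iff.2 (mul_pos hc (sub_pos.2 ht))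
    have hgpos : ∀ t, ε < t → 0 < g t := by
      intro t ht
      exact mul_pos hq (div_pos (Real.cosh_pos _) (hsinh_pos t ht))
    have hgderiv : ∀ t, ε < t → HasDerivAt g (-b / (Real.sinh (c * (t - ε)))^2) t := by
      intro t ht
      have := (coth_hasDerivAt hc ht).const_mul q
      refine this.congr_deriv ?_
      rw [mul_div_assoc', mul_neg, hqc]
    have hgsq : ∀ t, ε < t → -a * (g t)^2 + b = -b / (Real.sinh (c * (t - ε)))^2 := by
      intro t ht
      have h1 := (hsinh_pos t ht).ne'
      have hid : Real.cosh (c * (t - ε)) ^ 2 - Real.sinh (c * (t - ε)) ^ 2 = 1 :=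
        Real.cosh_sq_sub_sinh_sq _
      have hgt : (g t)^2 = (b / a) * (Real.cosh (c * (t - ε)))^2 / (Real.sinh (c * (t - ε)))^2 := by
        rw [hg_def]
        simp only
        rw [mul_pow, hq2, div_pow]
        ring
      rw [hgt]
      field_simp
      linear_combination (-1) * hid
    -- g tends to +∞ as t → ε from the right
    have h_top : Tendsto g (𝓝[>] ε) atTop := by
      have hnum : Tendsto (fun t => q * Real.cosh (c * (t - ε))) (𝓝[>] ε) (𝓝 q) := by
        have hca : ContinuousAt (fun t => q * Real.cosh (c * (t - ε))) ε := by fun_prop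
        have h := hca.tendsto.mono_left (nhdsWithin_le_nhds (s := Set.Ioi ε))
        simpa using h
      have hden : Tendsto (fun t => Real.sinh (c * (t - ε))) (𝓝[>] ε) (𝓝[>] 0) := by
        rw [tendsto_nhdsWithin_iff]
        constructor
        · have hca : ContinuousAt (fun t => Real.sinh (c * (t - ε))) ε := by fun_prop
          have h := hca.tendsto.mono_left (nhdsWithin_le_nhds (s := Set.Ioi ε))
          simpa using h
        · filter_upwards [self_mem_nhdsWithin] with t ht
          exact hsinh_pos t ht
      have hinv : Tendsto (fun t => (Real.sinh (c * (t - ε)))⁻¹) (𝓝[>] ε) atTop :=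
        tendsto_inv_nhdsGT_zero.comp hden
      have h := hnum.pos_mul_atTop hq hinv
      refine h.congr (fun t => ?_)
      rw [hg_def]
      simp only
      rw [div_eq_mul_inv]
      ring
    -- find a starting point s with y s ≤ g s
    have hyc : ContinuousAt y ε := (hderiv ε ⟨hε0, hεT⟩).continuousAt
    have hy_ev : ∀ᶠ t in 𝓝[>] ε, y t < y ε + 1 := by
      have : ∀ᶠ t in 𝓝 ε, y t < y ε + 1 :=
        hyc.eventually_lt continuousAt_const (by linarith)
      exact this.filter_mono nhdsWithin_le_nhds
    have hg_ev : ∀ᶠ t in 𝓝[>] ε, y ε + 1 ≤ g t := h_top.eventually_ge_atTop _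
    have ht₀_ev : ∀ᶠ t in 𝓝[>] ε, t < t₀ :=
      (Filter.Tendsto.eventually_lt_const hεt₀ (tendsto_nhdsWithin_of_tendsto_nhds tendsto_id))
    obtain ⟨s, ⟨hs1, hs2, hs3⟩, hs4⟩ :=
      ((hy_ev.and (hg_ev.and ht₀_ev)).and self_mem_nhdsWithin).exists
    -- hs1 : y s < y ε + 1, hs2, hs3 : s < t₀, hs4 : s ∈ Ioi ε
    have hsε : ε < s := hs4
    have hys : y s ≤ g s := le_of_lt (lt_of_lt_of_le hs1 hs2)
    -- apply the fencing theorem on [s, t₀] with B = g + ε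
    have hsub : Set.Icc s t₀ ⊆ Set.Ioo 0 T := fun x ⟨h1, h2⟩ =>
      ⟨lt_of_lt_of_le (hε0.trans hsε) h1, lt_of_le_of_lt h2 ht₀T⟩
    have hfence : ∀ ⦃x⦄, x ∈ Set.Icc s t₀ → y x ≤ g x + ε := by
      refine image_le_of_deriv_right_lt_deriv_boundary'
        (f := y) (f' := y') (B := fun t => g t + ε)
        (B' := fun t => -b / (Real.sinh (c * (t - ε)))^2) ?_ ?_ ?_ ?_ ?_ ?_
      · intro x hx
        exact ((hderiv x (hsub hx)).continuousAt).continuousWithinAt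
      · intro x hx
        exact ((hderiv x (hsub ⟨hx.1, hx.2.le⟩)).hasDerivWithinAt)
      · show y s ≤ g s + ε
        linarith
      · intro x hx
        have hx' : ε < x := hsε.trans_le hx.1
        exact (((hgderiv x hx').add_const ε).continuousAt).continuousWithinAt
      · intro x hx
        have hx' : ε < x := hsε.trans_le hx.1
        simpa using ((hgderiv x hx').add_const ε).hasDerivWithinAt
      · intro x hx hcontact
        have hx' : ε < x := hsε.trans_le hx.1
        have hgx : 0 < g x := hgpos x hx'
        have hcontact' : y x = g x + ε := hcontact
        have hyx : 0 < y x := by rw [hcontact']; linarith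
        have h1 : y' x ≤ -a * (y x)^2 + b := hineq x (hsub ⟨hx.1, hx.2.le⟩) hyx
        have h2 : -a * (y x)^2 + b < -a * (g x)^2 + b := by
          have : (g x)^2 < (y x)^2 := by
            rw [hcontact']; nlinarith
          nlinarith
        calc y' x ≤ -a * (y x)^2 + b := h1
          _ < -a * (g x)^2 + b := h2
          _ = -b / (Real.sinh (c * (x - ε)))^2 := hgsq x hx'
    exact hfence ⟨hs3.le, le_rfl⟩
  -- pass to the limit ε → 0⁺
  have hsinh0 : 0 < Real.sinh (c * t₀) := Real.sinh_pos_iff.2 (by positivity)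
  have hlim : Tendsto (fun ε => q * (Real.cosh (c * (t₀ - ε)) / Real.sinh (c * (t₀ - ε))) + ε)
      (𝓝[>] (0:ℝ)) (𝓝 (q * (Real.cosh (c * t₀) / Real.sinh (c * t₀)))) := by
    have hca : ContinuousAt
        (fun ε : ℝ => q * (Real.cosh (c * (t₀ - ε)) / Real.sinh (c * (t₀ - ε))) + ε) 0 := by
      have h1 : ContinuousAt (fun ε : ℝ => Real.sinh (c * (t₀ - ε))) 0 := by fun_prop
      have h2 : ContinuousAt (fun ε : ℝ => Real.cosh (c * (t₀ - ε))) 0 := by fun_prop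
      have hne : Real.sinh (c * (t₀ - 0)) ≠ 0 := by simpa using hsinh0.ne'
      exact ((continuousAt_const.mul (h2.div h1 hne)).add continuousAt_id)
    have h := hca.tendsto.mono_left (nhdsWithin_le_nhds (s := Set.Ioi (0:ℝ)))
    simpa using h
  refine ge_of_tendsto hlim ?_
  filter_upwards [Ioo_mem_nhdsGT_of_mem ⟨le_rfl, ht₀0⟩] with ε hε
  exact key ε hε
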